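/- A positive function f on (0,∞) is HH-convex (i.e., f((αx^{-1}+(1-α)y^{-1})^{-1}) ≤ (αf(x)^{-1}+(1-α)f(y)^{-1})^{-1} for all x,y>0, α∈[0,1]) if and only if the function h(t)=t/f(t) is concave on (0,∞). -/

import Mathlib

theorem hh_convex_iff_t_div_f_concave (f : ℝ → ℝ) (hf : ∀ x ∈ Set.Ioi (0:ℝ), 0 < f x) :
    (∀ x ∈ Set.Ioi (0:ℝ), ∀ y ∈ Set.Ioi (0:ℝ), ∀ α ∈ Set.Icc (0:ℝ) 1,
      f ((α * x⁻¹ + (1 - α) * y⁻¹)⁻¹) ≤ (α * (f x)⁻¹ + (1 - α) * (f y)⁻¹)⁻¹) ↔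
    ConcaveOn ℝ (Set.Ioi (0:ℝ)) (fun t => t / f t) := by
  constructor
  · intro H
    refine ⟨convex_Ioi 0, ?_⟩
    intro x hx y hy a b ha hb hab
    simp only [smul_eq_mul]
    have hx0 : (0:ℝ) < x := hx
    have hy0 : (0:ℝ) < y := hy
    have hH : (0:ℝ) < a*x + b*y := by
      rcases eq_or_lt_of_le ha with h|h
      · have hb1 : b = 1 := by linarith
        rw [← h, hb1]; simpa using hy0
      · nlinarith [mul_pos h hx0, mul_nonneg hb hy0.le]
    set α : ℝ := a * x / (a*x + b*y) with hα
    have hα0 : 0 ≤ α := by positivity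
    have hα1 : α ≤ 1 := by
      rw [hα, div_le_one hH]; nlinarith
    have h1α : 1 - α = b * y / (a*x + b*y) := by
      rw [hα]; field_simp; ring
    have key := H x hx y hy α ⟨hα0, hα1⟩
    have harm : (α * x⁻¹ + (1 - α) * y⁻¹)⁻¹ = a*x + b*y := by
      rw [h1α, hα]
      rw [div_mul_eq_mul_div, div_mul_eq_mul_div, ← add_div]
      rw [mul_assoc, mul_inv_cancel₀ hx0.ne', mul_one, mul_assoc,
        mul_inv_cancel₀ hy0.ne', mul_one, hab, div_eq_mul_inv, one_mul, inv_inv]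
    rw [harm] at key
    have hfx := hf x hx
    have hfy := hf y hy
    have hfH := hf (a*x+b*y) hH
    have hden : 0 < α * (f x)⁻¹ + (1 - α) * (f y)⁻¹ := by
      rcases eq_or_lt_of_le hα0 with h|h
      · rw [← h]; simp; positivity
      · have h2 : 0 ≤ (1-α) * (f y)⁻¹ := by
          have : (0:ℝ) ≤ 1 - α := by linarith
          positivity
        have : 0 < α * (f x)⁻¹ := by positivity
        linarith
    have hmul : (α * (f x)⁻¹ + (1 - α) * (f y)⁻¹) * f (a*x+b*y) ≤ 1 := by
      have := mul_le_mul_of_nonneg_left key hden.le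
      rwa [mul_inv_cancel₀ hden.ne'] at this
    have hinv : α * (f x)⁻¹ + (1 - α) * (f y)⁻¹ ≤ (f (a*x+b*y))⁻¹ := by
      conv_rhs => rw [inv_eq_one_div]
      exact (le_div_iff₀ hfH).mpr hmul
    calc a*(x/f x)+b*(y/f y)
        = (a*x+b*y) * (α*(f x)⁻¹ + (1-α)*(f y)⁻¹) := by
          rw [h1α, hα]; field_simp
      _ ≤ (a*x+b*y) * (f (a*x+b*y))⁻¹ := by
          exact mul_le_mul_of_nonneg_left hinv hH.le
      _ = (a*x+b*y) / f (a*x+b*y) := by rw [div_eq_mul_inv]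
  · intro hc x hx y hy α hα
    obtain ⟨hα0, hα1⟩ := hα
    have hx0 : (0:ℝ) < x := hx
    have hy0 : (0:ℝ) < y := hy
    have hfx := hf x hx
    have hfy := hf y hy
    have hS : 0 < α * x⁻¹ + (1 - α) * y⁻¹ := by
      rcases eq_or_lt_of_le hα0 with h|h
      · rw [← h]; simp; positivity
      · have h2 : 0 ≤ (1-α) * y⁻¹ := by
          have : (0:ℝ) ≤ 1 - α := by linarith
          positivity
        have : 0 < α * x⁻¹ := by positivity
        linarith
    set Hm : ℝ := (α * x⁻¹ + (1 - α) * y⁻¹)⁻¹ with hHm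
    have hHm0 : 0 < Hm := by positivity
    have hfH := hf Hm (by exact hHm0)
    set lam : ℝ := Hm * α * x⁻¹ with hlam
    set mu : ℝ := Hm * (1 - α) * y⁻¹ with hmu
    have hl0 : 0 ≤ lam := by positivity
    have hm0 : 0 ≤ mu := by
      have : (0:ℝ) ≤ 1 - α := by linarith
      positivity
    have hsum : lam + mu = 1 := by
      rw [hlam, hmu, mul_assoc, mul_assoc, ← mul_add, hHm,
        inv_mul_cancel₀ hS.ne']
    have hcomb : lam * x + mu * y = Hm := by
      rw [hlam, hmu, mul_assoc, mul_assoc, mul_assoc, mul_assoc,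
        inv_mul_cancel₀ hx0.ne', inv_mul_cancel₀ hy0.ne', mul_one, mul_one,
        ← mul_add]
      have : α + (1 - α) = 1 := by ring
      rw [this, mul_one]
    have key := hc.2 hx hy hl0 hm0 hsum
    simp only [smul_eq_mul] at key
    rw [hcomb] at key
    -- key : lam * (x / f x) + mu * (y / f y) ≤ Hm / f Hm
    have key2 : Hm * (α * (f x)⁻¹ + (1 - α) * (f y)⁻¹) ≤ Hm * (f Hm)⁻¹ := by
      have e1 : lam * (x / f x) + mu * (y / f y)
          = Hm * (α * (f x)⁻¹ + (1 - α) * (f y)⁻¹) := by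
        rw [hlam, hmu]; field_simp
      have e2 : Hm / f Hm = Hm * (f Hm)⁻¹ := div_eq_mul_inv _ _
      rw [e1, e2] at key
      exact key
    have key3 : α * (f x)⁻¹ + (1 - α) * (f y)⁻¹ ≤ (f Hm)⁻¹ :=
      le_of_mul_le_mul_left key2 hHm0
    have hden : 0 < α * (f x)⁻¹ + (1 - α) * (f y)⁻¹ := by
      rcases eq_or_lt_of_le hα0 with h|h
      · rw [← h]; simp; positivity
      · have h2 : 0 ≤ (1-α) * (f y)⁻¹ := by
          have : (0:ℝ) ≤ 1 - α := by linarith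
          positivity
        have : 0 < α * (f x)⁻¹ := by positivity
        linarith
    calc f Hm = ((f Hm)⁻¹)⁻¹ := by rw [inv_inv]
      _ ≤ (α * (f x)⁻¹ + (1 - α) * (f y)⁻¹)⁻¹ := by
          exact inv_anti₀ hden key3
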